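/- Let H_d' = {χ_{[n]} : 1 ≤ n ≤ 2^d} ∪ {χ_E} over domain ℕ, where E = {2^d + i : 1 ≤ i ≤ d−1} and 2 < d < ∞. Then Ldim(H_d') = d, yet there exists an online learner A with mistake bound M_A(H_d') = d (so A is optimal) that makes d−1 mistakes on the H_d'-realizable sample ((x,1))_{x∈E}, while any anytime optimal learner makes at most 1 mistake on that sample. -/

import Mathlib

open Classical

variable {X : Type*}

/-- A hypothesis `h` is consistent with a sample `S`. -/
def Consistent (h : X → Bool) (S : List (X × Bool)) : Prop :=
  ∀ p ∈ S, h p.1 = p.2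

/-- A sample is realizable by the class `H`. -/
def Realizable (H : Set (X → Bool)) (S : List (X × Bool)) : Prop :=
  ∃ h ∈ H, Consistent h S

/-- The version space `H_S`. -/
def VS (H : Set (X → Bool)) (S : List (X × Bool)) : Set (X → Bool) :=
  {h ∈ H | Consistent h S}

/-- `H^{(x,r)}`. -/
def Restrict (H : Set (X → Bool)) (x : X) (r : Bool) : Set (X → Bool) :=
  {h ∈ H | h x = r}

/-- `Shatters H d` holds iff there is a complete binary tree of depth `d` shattered by `H`,
equivalently stated recursively. -/
def Shatters (H : Set (X → Bool)) : ℕ → Prop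
  | 0 => H.Nonempty
  | d + 1 => ∃ x : X, Shatters (Restrict H x false) d ∧ Shatters (Restrict H x true) d

/-- Littlestone dimension, with `Ldim ∅ = ⊥` (playing the role of `-1`). -/
noncomputable def Ldim (H : Set (X → Bool)) : WithBot ℕ∞ :=
  ⨆ d ∈ {d : ℕ | Shatters H d}, ((d : ℕ∞) : WithBot ℕ∞)

def MistakesFrom (A : List (X × Bool) → X → Bool) :
    List (X × Bool) → List (X × Bool) → ℕ
  | _, [] => 0
  | pre, p :: rest =>
      (if A pre p.1 ≠ p.2 then 1 else 0) + MistakesFrom A (pre ++ [p]) rest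

/-- Number of mistakes that the online learner `A` makes on the sample `S`. -/
def Mistakes (A : List (X × Bool) → X → Bool) (S : List (X × Bool)) : ℕ :=
  MistakesFrom A [] S

/-- Mistake bound of `A` with respect to `H`. -/
noncomputable def MB (A : List (X × Bool) → X → Bool) (H : Set (X → Bool)) : ℕ∞ :=
  ⨆ S ∈ {S | Realizable H S}, (Mistakes A S : ℕ∞)

/-- `A` is an optimal online learner for `H`. -/
def IsOptimal (A : List (X × Bool) → X → Bool) (H : Set (X → Bool)) : Prop :=
  MB A H = ⨅ B : List (X × Bool) → X → Bool, MB B H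

/-- Post-`S` mistake bound of `A` w.r.t. `H`. -/
noncomputable def PostMB (A : List (X × Bool) → X → Bool) (H : Set (X → Bool))
    (S : List (X × Bool)) : ℕ∞ :=
  ⨆ S' ∈ {S' | Realizable H (S ++ S')}, ((Mistakes A (S ++ S') - Mistakes A S : ℕ) : ℕ∞)

/-- Optimal post-`S` mistake bound. -/
noncomputable def OptPostMB (H : Set (X → Bool)) (S : List (X × Bool)) : ℕ∞ :=
  ⨅ A : List (X × Bool) → X → Bool, PostMB A H S

/-- `A` is anytime optimal for `H`. -/
def AnytimeOptimal (A : List (X × Bool) → X → Bool) (H : Set (X → Bool)) : Prop :=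
  ∀ S, Realizable H S → PostMB A H S = OptPostMB H S

/-- `χ_{[n]}`. -/
def chiInterval (n : ℕ) : ℕ → Bool := fun m => decide (1 ≤ m ∧ m ≤ n)

/-- `χ_E` where `E = {2^d + i : 1 ≤ i ≤ d-1}`. -/
def chiE (d : ℕ) : ℕ → Bool := fun m => decide (2 ^ d + 1 ≤ m ∧ m ≤ 2 ^ d + (d - 1))

/-- The class `H_d' = {χ_{[n]} : 1 ≤ n ≤ 2^d} ∪ {χ_E}`. -/
def Hd' (d : ℕ) : Set (ℕ → Bool) :=
  {f | ∃ n : ℕ, 1 ≤ n ∧ n ≤ 2 ^ d ∧ f = chiInterval n} ∪ {chiE d}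

/-- The sample `((x,1))_{x ∈ E}`. -/
def SE (d : ℕ) : List (ℕ × Bool) :=
  (List.range (d - 1)).map fun i => (2 ^ d + i + 1, true)

/-! ### Auxiliary lemmas -/

section Basic

variable {A : List (X × Bool) → X → Bool} {H : Set (X → Bool)}

lemma mistakesFrom_nil (pre : List (X × Bool)) : MistakesFrom A pre [] = 0 := rfl

lemma mistakesFrom_cons (pre : List (X × Bool)) (p : X × Bool) (rest : List (X × Bool)) :
    MistakesFrom A pre (p :: rest) =
      (if A pre p.1 ≠ p.2 then 1 else 0) + MistakesFrom A (pre ++ [p]) rest := rfl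

lemma mistakesFrom_le_length : ∀ (S pre : List (X × Bool)), MistakesFrom A pre S ≤ S.length
  | [], _ => le_refl _
  | p :: rest, pre => by
      rw [mistakesFrom_cons, List.length_cons]
      have := mistakesFrom_le_length rest (pre ++ [p])
      split <;> omega

lemma mistakesFrom_append : ∀ (S T pre : List (X × Bool)),
    MistakesFrom A pre (S ++ T) = MistakesFrom A pre S + MistakesFrom A (pre ++ S) T
  | [], T, pre => by simp [mistakesFrom_nil]
  | p :: rest, T, pre => by
      rw [List.cons_append, mistakesFrom_cons, mistakesFrom_cons,
        mistakesFrom_append rest T (pre ++ [p])]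
      simp [List.append_assoc]
      omega

lemma mistakesFrom_all_wrong : ∀ (S pre : List (X × Bool)),
    (∀ k (hk : k < S.length), A (pre ++ S.take k) (S[k].1) ≠ S[k].2) →
    MistakesFrom A pre S = S.length
  | [], _, _ => rfl
  | p :: rest, pre, hw => by
      rw [mistakesFrom_cons]
      have h0 := hw 0 (by simp)
      simp at h0
      rw [if_pos h0, mistakesFrom_all_wrong rest (pre ++ [p]) (fun k hk => by
        have := hw (k + 1) (by simpa using Nat.succ_lt_succ hk)
        simpa [List.append_assoc] using this)]
      simp [Nat.add_comm]

lemma consistent_append {h : X → Bool} {S T : List (X × Bool)} :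
    Consistent h (S ++ T) ↔ Consistent h S ∧ Consistent h T := by
  constructor
  · intro hc
    exact ⟨fun p hp => hc p (List.mem_append_left _ hp),
           fun p hp => hc p (List.mem_append_right _ hp)⟩
  · rintro ⟨h1, h2⟩ p hp
    rcases List.mem_append.1 hp with hp' | hp'
    · exact h1 p hp'
    · exact h2 p hp'

lemma consistent_singleton {h : X → Bool} {p : X × Bool} :
    Consistent h [p] ↔ h p.1 = p.2 := by
  constructor
  · intro hc; exact hc p (List.mem_singleton_self p)
  · intro hc q hq
    rw [List.mem_singleton] at hq
    subst hq; exact hc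

lemma realizable_of_append {S T : List (X × Bool)} (hr : Realizable H (S ++ T)) :
    Realizable H S := by
  obtain ⟨h, hh, hc⟩ := hr
  exact ⟨h, hh, (consistent_append.1 hc).1⟩

lemma VS_nil : VS H ([] : List (X × Bool)) = H := by
  ext h; simp [VS, Consistent]

lemma VS_subset (S : List (X × Bool)) : VS H S ⊆ H := fun h hh => hh.1

lemma VS_append_singleton (S : List (X × Bool)) (p : X × Bool) :
    VS H (S ++ [p]) = Restrict (VS H S) p.1 p.2 := by
  ext h
  simp only [VS, Restrict, Set.mem_setOf_eq, consistent_append, consistent_singleton]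
  tauto

lemma VS_mono_append (S T : List (X × Bool)) : VS H (S ++ T) ⊆ VS H S := by
  intro h hh
  exact ⟨hh.1, (consistent_append.1 hh.2).1⟩

lemma realizable_iff_VS_nonempty {S : List (X × Bool)} :
    Realizable H S ↔ (VS H S).Nonempty := by
  constructor
  · rintro ⟨h, hh, hc⟩; exact ⟨h, hh, hc⟩
  · rintro ⟨h, hh, hc⟩; exact ⟨h, hh, hc⟩

lemma restrict_partition (V : Set (X → Bool)) (x : X) :
    Restrict V x true ∪ Restrict V x false = V := by
  ext h
  simp only [Restrict, Set.mem_union, Set.mem_setOf_eq, Set.mem_sep_iff]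
  cases hx : h x <;> tauto

lemma ncard_restrict_add {V : Set (X → Bool)} (hV : V.Finite) (x : X) :
    (Restrict V x true).ncard + (Restrict V x false).ncard = V.ncard := by
  have hsub1 : Restrict V x true ⊆ V := fun h hh => hh.1
  have hsub2 : Restrict V x false ⊆ V := fun h hh => hh.1
  have hdisj : Disjoint (Restrict V x true) (Restrict V x false) := by
    rw [Set.disjoint_iff]
    rintro h ⟨⟨_, h1⟩, ⟨_, h2⟩⟩
    simp [h1] at h2
  rw [← Set.ncard_union_eq hdisj (hV.subset hsub1) (hV.subset hsub2), restrict_partition]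

end Basic
section Chi

lemma chiInterval_true_iff {n m : ℕ} : chiInterval n m = true ↔ 1 ≤ m ∧ m ≤ n := by
  simp [chiInterval]

lemma chiInterval_false_iff {n m : ℕ} : chiInterval n m = false ↔ ¬(1 ≤ m ∧ m ≤ n) := by
  simp [chiInterval]

lemma chiE_true_iff {d m : ℕ} : chiE d m = true ↔ 2 ^ d + 1 ≤ m ∧ m ≤ 2 ^ d + (d - 1) := by
  simp [chiE]

lemma chiInterval_inj {n m : ℕ} (hn : 1 ≤ n) (hm : 1 ≤ m)
    (h : chiInterval n = chiInterval m) : n = m := by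
  have h1 : chiInterval n n = true := chiInterval_true_iff.2 ⟨hn, le_refl n⟩
  have h2 : chiInterval m m = true := chiInterval_true_iff.2 ⟨hm, le_refl m⟩
  rw [h] at h1
  rw [← h] at h2
  have := chiInterval_true_iff.1 h1
  have := chiInterval_true_iff.1 h2
  omega

lemma chiInterval_injOn {a b : ℕ} (ha : 1 ≤ a) : Set.InjOn chiInterval (Set.Icc a b) := by
  intro n hn m hm h
  exact chiInterval_inj (le_trans ha hn.1) (le_trans ha hm.1) h

lemma Hd'_eq (d : ℕ) : Hd' d = chiInterval '' Set.Icc 1 (2 ^ d) ∪ {chiE d} := by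
  ext f
  simp only [Hd', Set.mem_union, Set.mem_setOf_eq, Set.mem_singleton_iff, Set.mem_image,
    Set.mem_Icc]
  constructor
  · rintro (⟨n, h1, h2, rfl⟩ | h)
    · exact Or.inl ⟨n, ⟨h1, h2⟩, rfl⟩
    · exact Or.inr h
  · rintro (⟨n, ⟨h1, h2⟩, rfl⟩ | h)
    · exact Or.inl ⟨n, h1, h2, rfl⟩
    · exact Or.inr h

lemma Hd'_finite (d : ℕ) : (Hd' d).Finite := by
  rw [Hd'_eq]
  exact ((Set.finite_Icc _ _).image _).union (Set.finite_singleton _)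

lemma Hd'_ncard_le (d : ℕ) : (Hd' d).ncard ≤ 2 ^ d + 1 := by
  rw [Hd'_eq]
  refine le_trans (Set.ncard_union_le _ _) ?_
  have h1 : (chiInterval '' Set.Icc 1 (2 ^ d)).ncard ≤ (Set.Icc 1 (2 ^ d)).ncard :=
    Set.ncard_image_le (Set.finite_Icc _ _)
  have h2 : (Set.Icc 1 (2 ^ d)).ncard = 2 ^ d := by
    rw [← Finset.coe_Icc, Set.ncard_coe_finset, Nat.card_Icc]
    simp
  rw [Set.ncard_singleton]
  rw [h2] at h1
  omega

lemma chiInterval_mem_Hd' {d n : ℕ} (h1 : 1 ≤ n) (h2 : n ≤ 2 ^ d) :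
    chiInterval n ∈ Hd' d := Or.inl ⟨n, h1, h2, rfl⟩

lemma chiE_mem_Hd' (d : ℕ) : chiE d ∈ Hd' d := Or.inr rfl

end Chi

lemma ncard_Icc (a b : ℕ) : (Set.Icc a b).ncard = b + 1 - a := by
  rw [← Finset.coe_Icc, Set.ncard_coe_finset, Nat.card_Icc]

section Shat

lemma shatters_mono : ∀ (k : ℕ) {H H' : Set (X → Bool)}, H ⊆ H' → Shatters H k → Shatters H' k
  | 0, _, _, hsub, ⟨h, hh⟩ => ⟨h, hsub hh⟩
  | k + 1, _, _, hsub, ⟨x, hf, ht⟩ =>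
      ⟨x, shatters_mono k (fun h hh => ⟨hsub hh.1, hh.2⟩) hf,
          shatters_mono k (fun h hh => ⟨hsub hh.1, hh.2⟩) ht⟩

lemma shatters_ncard : ∀ (k : ℕ) (H : Set (X → Bool)), Shatters H k → H.Finite →
    2 ^ k ≤ H.ncard
  | 0, H, ⟨h, hh⟩, hfin => by
      have : 0 < H.ncard := (Set.ncard_pos hfin).2 ⟨h, hh⟩
      omega
  | k + 1, H, ⟨x, hf, ht⟩, hfin => by
      have hsub1 : Restrict H x true ⊆ H := fun h hh => hh.1
      have hsub2 : Restrict H x false ⊆ H := fun h hh => hh.1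
      have h1 := shatters_ncard k _ ht (hfin.subset hsub1)
      have h2 := shatters_ncard k _ hf (hfin.subset hsub2)
      have hadd := ncard_restrict_add hfin x
      rw [pow_succ]
      omega

lemma shatters_Icc : ∀ (k a : ℕ), 1 ≤ a →
    Shatters (chiInterval '' Set.Icc a (a + 2 ^ k - 1)) k
  | 0, a, ha => ⟨chiInterval a, a, by simp, rfl⟩
  | k + 1, a, ha => by
      refine ⟨a + 2 ^ k, ?_, ?_⟩
      · refine shatters_mono k ?_ (shatters_Icc k a ha)
        rintro f ⟨n, hn, rfl⟩
        rw [Set.mem_Icc] at hn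
        have hk : (1 : ℕ) ≤ 2 ^ k := Nat.one_le_two_pow
        have hk1 : 2 ^ k + 2 ^ k = 2 ^ (k + 1) := by rw [pow_succ]; omega
        refine ⟨⟨n, Set.mem_Icc.2 ⟨hn.1, by omega⟩, rfl⟩, ?_⟩
        rw [chiInterval_false_iff]
        omega
      · refine shatters_mono k ?_ (shatters_Icc k (a + 2 ^ k) (by have : (1:ℕ) ≤ 2 ^ k := Nat.one_le_two_pow; omega))
        rintro f ⟨n, hn, rfl⟩
        rw [Set.mem_Icc] at hn
        have hk : (1 : ℕ) ≤ 2 ^ k := Nat.one_le_two_pow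
        have hk1 : 2 ^ k + 2 ^ k = 2 ^ (k + 1) := by rw [pow_succ]; omega
        refine ⟨⟨n, Set.mem_Icc.2 ⟨by omega, by omega⟩, rfl⟩, ?_⟩
        rw [chiInterval_true_iff]
        omega

lemma shatters_Hd' (d : ℕ) : Shatters (Hd' d) d := by
  refine shatters_mono d ?_ (shatters_Icc d 1 (le_refl 1))
  rintro f ⟨n, hn, rfl⟩
  rw [Set.mem_Icc] at hn
  have hk : (1 : ℕ) ≤ 2 ^ d := Nat.one_le_two_pow
  exact chiInterval_mem_Hd' hn.1 (by omega)

lemma shatters_Hd'_le {d k : ℕ} (hd : 1 ≤ d) (hk : Shatters (Hd' d) k) : k ≤ d := by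
  have h1 := shatters_ncard k _ hk (Hd'_finite d)
  have h2 := Hd'_ncard_le d
  have h3 : 2 ^ k < 2 ^ (d + 1) := by
    have : (2:ℕ) ^ d + 1 < 2 ^ (d + 1) := by
      have : (2:ℕ) ^ d ≥ 2 := by
        calc (2:ℕ) = 2 ^ 1 := (pow_one 2).symm
        _ ≤ 2 ^ d := Nat.pow_le_pow_right (by norm_num) hd
      rw [pow_succ]
      omega
    omega
  have := (Nat.pow_lt_pow_iff_right (a := 2) (by norm_num)).1 h3
  omega

lemma Ldim_Hd' {d : ℕ} (hd : 1 ≤ d) : Ldim (Hd' d) = ((d : ℕ∞) : WithBot ℕ∞) := by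
  apply le_antisymm
  · refine iSup₂_le fun k hk => ?_
    have : k ≤ d := shatters_Hd'_le hd hk
    exact_mod_cast WithBot.coe_le_coe.2 (by exact_mod_cast this)
  · exact le_iSup₂ (f := fun (k : ℕ) (_ : k ∈ {k : ℕ | Shatters (Hd' d) k}) =>
      ((k : ℕ∞) : WithBot ℕ∞)) d (shatters_Hd' d)

end Shat
section Halv

/-- The halving predictor. -/
noncomputable def halv (H : Set (X → Bool)) (S : List (X × Bool)) (x : X) : Bool :=
  decide ((Restrict (VS H S) x false).ncard < (Restrict (VS H S) x true).ncard)

lemma halv_step {H : Set (X → Bool)} (hH : H.Finite) {S : List (X × Bool)} {p : X × Bool}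
    (hm : halv H S p.1 ≠ p.2) :
    2 * (VS H (S ++ [p])).ncard ≤ (VS H S).ncard := by
  rw [VS_append_singleton]
  have hfin : (VS H S).Finite := hH.subset (VS_subset S)
  have hadd := ncard_restrict_add hfin p.1
  cases hp : p.2
  · rw [hp] at hm
    have : halv H S p.1 = true := by
      cases hb : halv H S p.1
      · exact absurd hb hm
      · rfl
    rw [halv, decide_eq_true_iff] at this
    omega
  · rw [hp] at hm
    have : halv H S p.1 = false := by
      cases hb : halv H S p.1
      · rfl
      · exact absurd hb hm
    rw [halv, decide_eq_false_iff_not, not_lt] at this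
    omega

lemma halv_singleton {g : X → Bool} {S : List (X × Bool)} {H : Set (X → Bool)}
    (hVS : VS H S = {g}) (x : X) : halv H S x = g x := by
  rw [halv, hVS]
  cases hg : g x
  · have h1 : Restrict {g} x true = (∅ : Set (X → Bool)) := by
      ext f
      simp only [Restrict, Set.mem_setOf_eq, Set.mem_singleton_iff, Set.mem_empty_iff_false,
        iff_false, not_and]
      rintro rfl; simp [hg]
    have h2 : Restrict {g} x false = ({g} : Set (X → Bool)) := by
      ext f
      simp only [Restrict, Set.mem_setOf_eq, Set.mem_singleton_iff]
      constructor
      · rintro ⟨hf, _⟩; exact hf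
      · rintro rfl; exact ⟨rfl, hg⟩
    rw [h1, h2]
    simp
  · have h1 : Restrict {g} x true = ({g} : Set (X → Bool)) := by
      ext f
      simp only [Restrict, Set.mem_setOf_eq, Set.mem_singleton_iff]
      constructor
      · rintro ⟨hf, _⟩; exact hf
      · rintro rfl; exact ⟨rfl, hg⟩
    have h2 : Restrict {g} x false = (∅ : Set (X → Bool)) := by
      ext f
      simp only [Restrict, Set.mem_setOf_eq, Set.mem_singleton_iff, Set.mem_empty_iff_false,
        iff_false, not_and]
      rintro rfl; simp [hg]
    rw [h1, h2]
    simp [Set.ncard_singleton]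

end Halv
section Learner

/-- The sample contains a point above `2^d` labelled `true`. -/
def hasBig (d : ℕ) (S : List (ℕ × Bool)) : Prop := ∃ p ∈ S, 2 ^ d < p.1 ∧ p.2 = true

/-- The "stubborn" optimal learner. -/
noncomputable def lrn (d : ℕ) (pre : List (ℕ × Bool)) (x : ℕ) : Bool :=
  if 1 ≤ pre.length ∧ pre.length < d - 1 ∧ pre <+: SE d ∧ x = 2 ^ d + pre.length + 1 then
    false
  else halv (Hd' d) pre x

lemma SE_length (d : ℕ) : (SE d).length = d - 1 := by simp [SE]

lemma SE_getElem (d : ℕ) {k : ℕ} (hk : k < (SE d).length) :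
    (SE d)[k] = (2 ^ d + k + 1, true) := by
  simp [SE]

lemma consistent_forces_chiE {d : ℕ} (hd : 2 < d) {h : ℕ → Bool} {S : List (ℕ × Bool)}
    (hh : h ∈ Hd' d) (hc : Consistent h S) (hbig : hasBig d S) : h = chiE d := by
  obtain ⟨p, hp, hp1, hp2⟩ := hbig
  rcases hh with ⟨n, hn1, hn2, rfl⟩ | hh
  · exfalso
    have := hc p hp
    rw [hp2, chiInterval_true_iff] at this
    omega
  · exact hh

lemma VS_hasBig {d : ℕ} (hd : 2 < d) {S : List (ℕ × Bool)} (hbig : hasBig d S)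
    (hr : Realizable (Hd' d) S) : VS (Hd' d) S = {chiE d} := by
  obtain ⟨h, hh, hc⟩ := hr
  have hchi : h = chiE d := consistent_forces_chiE hd hh hc hbig
  subst hchi
  ext g
  simp only [Set.mem_singleton_iff]
  constructor
  · rintro ⟨hg, hgc⟩
    exact consistent_forces_chiE hd hg hgc hbig
  · rintro rfl
    exact ⟨chiE_mem_Hd' d, hc⟩

lemma hasBig_of_prefix {d : ℕ} {pre : List (ℕ × Bool)} (hpre : pre <+: SE d)
    (hlen : 1 ≤ pre.length) : hasBig d pre := by
  have h0 : pre[0] = (SE d)[0]'(by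
      have := hpre.length_le
      omega) := hpre.getElem (by omega)
  have hse : (SE d)[0]'(by have := hpre.length_le; omega) = (2 ^ d + 0 + 1, true) :=
    SE_getElem d _
  refine ⟨pre[0], List.getElem_mem _, ?_⟩
  rw [h0, hse]
  simp

lemma lrn_eq_halv {d : ℕ} {pre : List (ℕ × Bool)} (hnb : ¬ hasBig d pre) (x : ℕ) :
    lrn d pre x = halv (Hd' d) pre x := by
  rw [lrn, if_neg]
  rintro ⟨h1, _, h3, _⟩
  exact hnb (hasBig_of_prefix h3 h1)

lemma consistent_sub {h : X → Bool} {S T : List (X × Bool)} (hsub : ∀ q ∈ T, q ∈ S)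
    (hc : Consistent h S) : Consistent h T := fun q hq => hc q (hsub q hq)

lemma realizable_sub {H : Set (X → Bool)} {S T : List (X × Bool)} (hr : Realizable H S)
    (hsub : ∀ q ∈ T, q ∈ S) : Realizable H T := by
  obtain ⟨h, hh, hc⟩ := hr
  exact ⟨h, hh, consistent_sub hsub hc⟩

lemma offscript_zero {d : ℕ} (hd : 2 < d) : ∀ (S pre : List (ℕ × Bool)), hasBig d pre →
    ¬ (pre <+: SE d) → Realizable (Hd' d) (pre ++ S) → MistakesFrom (lrn d) pre S = 0
  | [], _, _, _, _ => rfl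
  | p :: rest, pre, hbig, hnp, hr => by
      have hrpre : Realizable (Hd' d) pre := realizable_of_append hr
      have hVS : VS (Hd' d) pre = {chiE d} := VS_hasBig hd hbig hrpre
      have hpred : lrn d pre p.1 = chiE d p.1 := by
        rw [lrn, if_neg, halv_singleton hVS]
        rintro ⟨_, _, h3, _⟩
        exact hnp h3
      obtain ⟨h, hh, hc⟩ := id hr
      have hchi : h = chiE d := consistent_forces_chiE hd hh hc
        ⟨hbig.choose, List.mem_append_left _ hbig.choose_spec.1, hbig.choose_spec.2⟩
      have hlabel : p.2 = chiE d p.1 := by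
        rw [← hchi]
        exact (hc p (by simp)).symm
      rw [mistakesFrom_cons, if_neg (by rw [hpred, ← hlabel]; simp)]
      rw [offscript_zero hd rest (pre ++ [p])
        ⟨hbig.choose, List.mem_append_left _ hbig.choose_spec.1, hbig.choose_spec.2⟩
        (fun hp' => hnp ((List.prefix_append pre [p]).trans hp'))
        (by rwa [List.append_assoc, List.singleton_append])]

lemma onscript_bound {d : ℕ} (hd : 2 < d) : ∀ (S pre : List (ℕ × Bool)), hasBig d pre →
    pre <+: SE d → Realizable (Hd' d) (pre ++ S) →
    MistakesFrom (lrn d) pre S ≤ (d - 1) - pre.length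
  | [], _, _, _, _ => Nat.zero_le _
  | p :: rest, pre, hbig, hpre, hr => by
      have hrpre : Realizable (Hd' d) pre := realizable_of_append hr
      have hVS : VS (Hd' d) pre = {chiE d} := VS_hasBig hd hbig hrpre
      obtain ⟨h, hh, hc⟩ := id hr
      have hbig' : hasBig d (pre ++ (p :: rest)) :=
        ⟨hbig.choose, List.mem_append_left _ hbig.choose_spec.1, hbig.choose_spec.2⟩
      have hchi : h = chiE d := consistent_forces_chiE hd hh hc hbig'
      have hlabel : p.2 = chiE d p.1 := by
        rw [← hchi]; exact (hc p (by simp)).symm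
      have hlen1 : 1 ≤ pre.length := by
        obtain ⟨q, hq, _⟩ := hbig
        exact List.length_pos_iff.2 (List.ne_nil_of_mem hq)
      have hlenle : pre.length ≤ d - 1 := by
        have := hpre.length_le
        rwa [SE_length] at this
      by_cases hcase : pre.length < d - 1 ∧ p.1 = 2 ^ d + pre.length + 1
      · -- scripted step: mistake, stay on script
        have hpred : lrn d pre p.1 = false := by
          rw [lrn, if_pos ⟨hlen1, hcase.1, hpre, hcase.2⟩]
        have hptrue : p.2 = true := by
          rw [hlabel, hcase.2, chiE_true_iff]
          omega
        have hp_eq : p = (2 ^ d + pre.length + 1, true) := by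
          ext
          · exact hcase.2
          · rw [hptrue]
        have hpre' : pre ++ [p] <+: SE d := by
          rw [List.prefix_iff_eq_take] at hpre ⊢
          have hlt : pre.length < (SE d).length := by rw [SE_length]; exact hcase.1
          rw [List.length_append, List.length_singleton, List.take_succ,
            List.getElem?_eq_getElem hlt, SE_getElem d hlt, ← hpre, hp_eq]
          simp
        have hrec := onscript_bound hd rest (pre ++ [p])
          ⟨hbig.choose, List.mem_append_left _ hbig.choose_spec.1, hbig.choose_spec.2⟩
          hpre' (by rwa [List.append_assoc, List.singleton_append])
        rw [mistakesFrom_cons]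
        rw [List.length_append, List.length_singleton] at hrec
        have : (if lrn d pre p.1 ≠ p.2 then 1 else 0) ≤ 1 := by split <;> omega
        have hc1 : pre.length < d - 1 := hcase.1
        omega
      · -- unscripted step: no mistake
        have hpred : lrn d pre p.1 = chiE d p.1 := by
          rw [lrn]
          rw [if_neg, halv_singleton hVS]
          rintro ⟨_, h2, _, h4⟩
          exact hcase ⟨h2, h4⟩
        rw [mistakesFrom_cons, if_neg (by rw [hpred, ← hlabel]; simp)]
        have hbig'' : hasBig d (pre ++ [p]) :=
          ⟨hbig.choose, List.mem_append_left _ hbig.choose_spec.1, hbig.choose_spec.2⟩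
        by_cases hp' : (pre ++ [p]) <+: SE d
        · have hrec := onscript_bound hd rest (pre ++ [p]) hbig'' hp'
            (by rwa [List.append_assoc, List.singleton_append])
          rw [List.length_append, List.length_singleton] at hrec
          omega
        · rw [offscript_zero hd rest (pre ++ [p]) hbig'' hp'
            (by rwa [List.append_assoc, List.singleton_append])]
          omega

lemma mult_bound {d : ℕ} (hd : 2 < d) : ∀ (S pre : List (ℕ × Bool)),
    (∀ p ∈ S, ¬ (2 ^ d < p.1 ∧ p.2 = true)) → ¬ hasBig d pre →
    2 ^ (MistakesFrom (lrn d) pre S) * (VS (Hd' d) (pre ++ S)).ncard ≤ (VS (Hd' d) pre).ncard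
  | [], pre, _, _ => by
      rw [mistakesFrom_nil, List.append_nil]
      simp
  | p :: rest, pre, hS, hnb => by
      have hnb' : ¬ hasBig d (pre ++ [p]) := by
        rintro ⟨q, hq, hq2⟩
        rcases List.mem_append.1 hq with hq' | hq'
        · exact hnb ⟨q, hq', hq2⟩
        · rw [List.mem_singleton] at hq'
          subst hq'
          exact hS q (by simp) hq2
      have hrec := mult_bound hd rest (pre ++ [p]) (fun q hq => hS q (by simp [hq])) hnb'
      rw [List.append_assoc] at hrec
      simp only [List.singleton_append] at hrec
      have hfin : (VS (Hd' d) pre).Finite := (Hd'_finite d).subset (VS_subset pre)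
      rw [mistakesFrom_cons]
      by_cases hm : lrn d pre p.1 ≠ p.2
      · rw [if_pos hm]
        have hstep : 2 * (VS (Hd' d) (pre ++ [p])).ncard ≤ (VS (Hd' d) pre).ncard := by
          refine halv_step (Hd'_finite d) ?_
          rwa [← lrn_eq_halv hnb]
        calc 2 ^ (1 + MistakesFrom (lrn d) (pre ++ [p]) rest) *
              (VS (Hd' d) (pre ++ p :: rest)).ncard
            = 2 * (2 ^ (MistakesFrom (lrn d) (pre ++ [p]) rest) *
              (VS (Hd' d) (pre ++ p :: rest)).ncard) := by ring
          _ ≤ 2 * (VS (Hd' d) (pre ++ [p])).ncard := by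
              have := hrec
              omega
          _ ≤ (VS (Hd' d) pre).ncard := hstep
      · rw [if_neg hm]
        have hsub : (VS (Hd' d) (pre ++ [p])).ncard ≤ (VS (Hd' d) pre).ncard :=
          Set.ncard_le_ncard (VS_mono_append pre [p]) hfin
        calc 2 ^ (0 + MistakesFrom (lrn d) (pre ++ [p]) rest) *
              (VS (Hd' d) (pre ++ p :: rest)).ncard
            = 2 ^ (MistakesFrom (lrn d) (pre ++ [p]) rest) *
              (VS (Hd' d) (pre ++ p :: rest)).ncard := by rw [Nat.zero_add]
          _ ≤ (VS (Hd' d) (pre ++ [p])).ncard := hrec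
          _ ≤ (VS (Hd' d) pre).ncard := hsub

end Learner
section MainBound

lemma first_split {α : Type*} (P : α → Prop) : ∀ (l : List α), (∃ x ∈ l, P x) →
    ∃ l₁ a l₂, l = l₁ ++ a :: l₂ ∧ P a ∧ ∀ b ∈ l₁, ¬ P b
  | [], h => absurd h (by simp)
  | x :: xs, h => by
      by_cases hx : P x
      · exact ⟨[], x, xs, rfl, hx, by simp⟩
      · obtain ⟨y, hy, hPy⟩ := h
        rw [List.mem_cons] at hy
        rcases hy with rfl | hy
        · exact absurd hPy hx
        · obtain ⟨l₁, a, l₂, rfl, hPa, hl₁⟩ := first_split P xs ⟨y, hy, hPy⟩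
          refine ⟨x :: l₁, a, l₂, rfl, hPa, ?_⟩
          intro b hb
          rw [List.mem_cons] at hb
          rcases hb with rfl | hb
          · exact hx
          · exact hl₁ b hb

lemma VS_ncard_pos {d : ℕ} {S : List (ℕ × Bool)} (hr : Realizable (Hd' d) S) :
    1 ≤ (VS (Hd' d) S).ncard := by
  have hfin : (VS (Hd' d) S).Finite := (Hd'_finite d).subset (VS_subset S)
  have : (VS (Hd' d) S).Nonempty := realizable_iff_VS_nonempty.1 hr
  have := (Set.ncard_pos hfin).2 this
  omega

lemma pow_le_imp_le_d {d m : ℕ} (hd : 1 ≤ d) (h : 2 ^ m ≤ 2 ^ d + 1) : m ≤ d := by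
  have h2 : (2:ℕ) ^ d ≥ 2 := by
    calc (2:ℕ) = 2 ^ 1 := (pow_one 2).symm
    _ ≤ 2 ^ d := Nat.pow_le_pow_right (by norm_num) hd
  have h3 : 2 ^ m < 2 ^ (d + 1) := by
    rw [pow_succ]
    omega
  have := (Nat.pow_lt_pow_iff_right (a := 2) (by norm_num)).1 h3
  omega

lemma main_bound {d : ℕ} (hd : 2 < d) {S : List (ℕ × Bool)} (hr : Realizable (Hd' d) S) :
    Mistakes (lrn d) S ≤ d := by
  have hVSnil : (VS (Hd' d) ([] : List (ℕ × Bool))).ncard ≤ 2 ^ d + 1 := by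
    rw [VS_nil]
    exact Hd'_ncard_le d
  by_cases hbig : ∃ p ∈ S, 2 ^ d < p.1 ∧ p.2 = true
  · obtain ⟨S₁, p, S₂, rfl, hp, hS₁⟩ := first_split _ S hbig
    have hnb1 : ¬ hasBig d S₁ := by
      rintro ⟨q, hq, hq2⟩
      exact hS₁ q hq hq2
    have hrS1p : Realizable (Hd' d) (S₁ ++ [p]) := realizable_sub hr (by
      intro q hq
      rcases List.mem_append.1 hq with hq' | hq'
      · exact List.mem_append_left _ hq'
      · rw [List.mem_singleton] at hq'
        subst hq'
        simp)
    have hrS1 : Realizable (Hd' d) S₁ := realizable_of_append hrS1p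
    have hbig1p : hasBig d (S₁ ++ [p]) := ⟨p, by simp, hp⟩
    have hm2 : MistakesFrom (lrn d) (S₁ ++ [p]) S₂ ≤ d - 2 := by
      by_cases hpfx : (S₁ ++ [p]) <+: SE d
      · have := onscript_bound hd S₂ (S₁ ++ [p]) hbig1p hpfx
          (by rwa [List.append_assoc, List.singleton_append])
        rw [List.length_append, List.length_singleton] at this
        omega
      · rw [offscript_zero hd S₂ (S₁ ++ [p]) hbig1p hpfx
          (by rwa [List.append_assoc, List.singleton_append])]
        omega
    have hsplit : MistakesFrom (lrn d) [] (S₁ ++ p :: S₂) =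
        MistakesFrom (lrn d) [] S₁ + ((if lrn d S₁ p.1 ≠ p.2 then 1 else 0) +
          MistakesFrom (lrn d) (S₁ ++ [p]) S₂) := by
      have h1 := mistakesFrom_append (A := lrn d) S₁ (p :: S₂) []
      rw [h1, mistakesFrom_cons]
      simp
    rcases List.eq_nil_or_concat S₁ with rfl | hne
    · -- S₁ = [] : at most 1 + (d-2) mistakes
      rw [Mistakes, hsplit, mistakesFrom_nil]
      have : (if lrn d [] p.1 ≠ p.2 then 1 else 0) ≤ 1 := by split <;> omega
      simp only [List.nil_append] at hm2 ⊢
      omega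
    · -- S₁ ≠ []
      have hS₁ne : S₁ ≠ [] := by
        obtain ⟨l, b, rfl⟩ := hne
        simp
      have hnpfx : ¬ (S₁ ++ [p]) <+: SE d := by
        intro hpfx
        have hlen0 : 0 < S₁.length := List.length_pos_iff.2 hS₁ne
        have hlenSE : 0 < (SE d).length := by
          rw [SE_length]; omega
        have h0 : (S₁ ++ [p])[0]'(by simp) = (SE d)[0]'hlenSE :=
          hpfx.getElem (by simp)
        rw [SE_getElem d hlenSE, List.getElem_append_left hlen0] at h0
        have : S₁[0]'hlen0 ∈ S₁ := List.getElem_mem _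
        rw [h0] at this
        exact hS₁ _ this (by simp)
      have hm2' : MistakesFrom (lrn d) (S₁ ++ [p]) S₂ = 0 :=
        offscript_zero hd S₂ (S₁ ++ [p]) hbig1p hnpfx
          (by rwa [List.append_assoc, List.singleton_append])
      have hmult := mult_bound hd S₁ [] (fun q hq => fun hq2 => hS₁ q hq hq2) (by
        rintro ⟨q, hq, _⟩
        simp at hq)
      rw [List.nil_append] at hmult
      have hpos1 : 1 ≤ (VS (Hd' d) S₁).ncard := VS_ncard_pos hrS1
      rw [Mistakes, hsplit, hm2']
      by_cases hm : lrn d S₁ p.1 ≠ p.2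
      · rw [if_pos hm]
        have hstep : 2 * (VS (Hd' d) (S₁ ++ [p])).ncard ≤ (VS (Hd' d) S₁).ncard := by
          refine halv_step (Hd'_finite d) ?_
          rwa [← lrn_eq_halv hnb1]
        have hpos2 : 1 ≤ (VS (Hd' d) (S₁ ++ [p])).ncard := VS_ncard_pos hrS1p
        have h2 : 2 ^ (MistakesFrom (lrn d) [] S₁ + 1) ≤ 2 ^ d + 1 := by
          calc 2 ^ (MistakesFrom (lrn d) [] S₁ + 1)
              = 2 ^ (MistakesFrom (lrn d) [] S₁) * 2 := by rw [pow_succ]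
            _ ≤ 2 ^ (MistakesFrom (lrn d) [] S₁) * (VS (Hd' d) S₁).ncard :=
                Nat.mul_le_mul_left _ (by omega)
            _ ≤ (VS (Hd' d) ([] : List (ℕ × Bool))).ncard := hmult
            _ ≤ 2 ^ d + 1 := hVSnil
        have := pow_le_imp_le_d (d := d) (by omega) h2
        omega
      · rw [if_neg hm]
        have h2 : 2 ^ (MistakesFrom (lrn d) [] S₁) ≤ 2 ^ d + 1 := by
          calc 2 ^ (MistakesFrom (lrn d) [] S₁)
              = 2 ^ (MistakesFrom (lrn d) [] S₁) * 1 := by ring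
            _ ≤ 2 ^ (MistakesFrom (lrn d) [] S₁) * (VS (Hd' d) S₁).ncard :=
                Nat.mul_le_mul_left _ hpos1
            _ ≤ (VS (Hd' d) ([] : List (ℕ × Bool))).ncard := hmult
            _ ≤ 2 ^ d + 1 := hVSnil
        have := pow_le_imp_le_d (d := d) (by omega) h2
        omega
  · have hmult := mult_bound hd S [] (fun q hq => fun hq2 => hbig ⟨q, hq, hq2⟩) (by
      rintro ⟨q, hq, _⟩
      simp at hq)
    rw [List.nil_append] at hmult
    have hpos : 1 ≤ (VS (Hd' d) S).ncard := VS_ncard_pos hr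
    have h2 : 2 ^ (Mistakes (lrn d) S) ≤ 2 ^ d + 1 := by
      calc 2 ^ (Mistakes (lrn d) S) = 2 ^ (Mistakes (lrn d) S) * 1 := by ring
      _ ≤ 2 ^ (MistakesFrom (lrn d) [] S) * (VS (Hd' d) S).ncard := by
          rw [Mistakes]
          exact Nat.mul_le_mul_left _ hpos
      _ ≤ (VS (Hd' d) ([] : List (ℕ × Bool))).ncard := hmult
      _ ≤ 2 ^ d + 1 := hVSnil
    exact pow_le_imp_le_d (by omega) h2

end MainBound
section Samples

lemma chiE_consistent_SE {d : ℕ} (hd : 2 < d) : Consistent (chiE d) (SE d) := by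
  intro p hp
  simp only [SE, List.mem_map, List.mem_range] at hp
  obtain ⟨i, hi, rfl⟩ := hp
  rw [chiE_true_iff]
  omega

lemma realizable_SE {d : ℕ} (hd : 2 < d) : Realizable (Hd' d) (SE d) :=
  ⟨chiE d, chiE_mem_Hd' d, chiE_consistent_SE hd⟩

lemma restrict_Hd'_true {d : ℕ} (hd : 2 < d) :
    Restrict (Hd' d) (2 ^ d + 1) true = {chiE d} := by
  ext h
  simp only [Restrict, Set.mem_setOf_eq, Set.mem_singleton_iff]
  constructor
  · rintro ⟨⟨n, hn1, hn2, rfl⟩ | hh, hx⟩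
    · rw [chiInterval_true_iff] at hx
      omega
    · exact hh
  · rintro rfl
    refine ⟨chiE_mem_Hd' d, ?_⟩
    rw [chiE_true_iff]
    omega

lemma halv_nil_big {d : ℕ} (hd : 2 < d) : halv (Hd' d) [] (2 ^ d + 1) = false := by
  rw [halv, decide_eq_false_iff_not, not_lt, VS_nil, restrict_Hd'_true hd,
    Set.ncard_singleton]
  have h1 : (1:ℕ) ≤ 2 ^ d := Nat.one_le_two_pow
  have hmem : chiInterval 1 ∈ Restrict (Hd' d) (2 ^ d + 1) false := by
    refine ⟨chiInterval_mem_Hd' (le_refl 1) h1, ?_⟩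
    rw [chiInterval_false_iff]
    omega
  have hfin : (Restrict (Hd' d) (2 ^ d + 1) false).Finite :=
    (Hd'_finite d).subset fun h hh => hh.1
  have := (Set.ncard_pos hfin).2 ⟨_, hmem⟩
  omega

lemma mistakes_SE {d : ℕ} (hd : 2 < d) : Mistakes (lrn d) (SE d) = d - 1 := by
  rw [Mistakes, mistakesFrom_all_wrong (SE d) [], SE_length]
  intro k hk
  rw [List.nil_append, SE_getElem d hk]
  rw [SE_length] at hk
  have htake : ((SE d).take k).length = k := by
    rw [List.length_take, SE_length]
    omega
  rcases Nat.eq_zero_or_pos k with rfl | hk1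
  · simp only [List.take_zero]
    rw [lrn, if_neg (by simp), halv_nil_big hd]
    simp
  · rw [lrn, if_pos ⟨by omega, by omega, List.take_prefix k (SE d), by rw [htake]⟩]
    simp

/-- The query points of the adversarial sample. -/
def qq (d k : ℕ) : ℕ := 2 ^ d - 2 ^ (d - 1 - k) + 1

/-- Adversarial sample on which the learner makes `d` mistakes. -/
def Sstar (d : ℕ) : List (ℕ × Bool) := (List.range d).map fun k => (qq d k, true)

lemma qq_pos (d k : ℕ) : 1 ≤ qq d k := by
  rw [qq]; omega

lemma qq_le (d k : ℕ) : qq d k ≤ 2 ^ d := by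
  have h1 : (1:ℕ) ≤ 2 ^ (d - 1 - k) := Nat.one_le_two_pow
  have h2 : 2 ^ (d - 1 - k) ≤ 2 ^ d := Nat.pow_le_pow_right (by norm_num) (by omega)
  rw [qq]; omega

lemma qq_mono {d j k : ℕ} (h : j ≤ k) : qq d j ≤ qq d k := by
  have h1 : 2 ^ (d - 1 - k) ≤ 2 ^ (d - 1 - j) := Nat.pow_le_pow_right (by norm_num) (by omega)
  have h2 : 2 ^ (d - 1 - j) ≤ 2 ^ d := Nat.pow_le_pow_right (by norm_num) (by omega)
  rw [qq, qq]; omega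

lemma realizable_Sstar (d : ℕ) : Realizable (Hd' d) (Sstar d) := by
  refine ⟨chiInterval (2 ^ d), chiInterval_mem_Hd' Nat.one_le_two_pow (le_refl _), ?_⟩
  intro p hp
  simp only [Sstar, List.mem_map, List.mem_range] at hp
  obtain ⟨k, hk, rfl⟩ := hp
  rw [chiInterval_true_iff]
  exact ⟨qq_pos d k, qq_le d k⟩

lemma Sstar_take (d k : ℕ) (hk : k ≤ d) :
    (Sstar d).take k = (List.range k).map fun j => (qq d j, true) := by
  rw [Sstar, ← List.map_take, List.take_range, Nat.min_eq_left hk]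

lemma consistent_Sstar_take {d k : ℕ} (hk : k ≤ d) {h : ℕ → Bool} :
    Consistent h ((Sstar d).take k) ↔ ∀ j < k, h (qq d j) = true := by
  rw [Sstar_take d k hk]
  simp only [Consistent, List.mem_map, List.mem_range]
  constructor
  · intro hc j hj
    exact hc (qq d j, true) ⟨j, hj, rfl⟩
  · rintro hc p ⟨j, hj, rfl⟩
    exact hc j hj

lemma lrn_Sstar_false {d k : ℕ} (hd : 2 < d) (hk : k < d) :
    lrn d ((Sstar d).take k) (qq d k) = false := by
  have hqle : qq d k ≤ 2 ^ d := qq_le d k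
  rw [lrn, if_neg (by rintro ⟨_, _, _, h4⟩; omega)]
  rw [halv, decide_eq_false_iff_not, not_lt]
  set V := VS (Hd' d) ((Sstar d).take k) with hV
  -- true side is contained in the image of Icc (qq d k) (2^d)
  have htsub : Restrict V (qq d k) true ⊆ chiInterval '' Set.Icc (qq d k) (2 ^ d) := by
    rintro h ⟨⟨hH, hcons⟩, hx⟩
    rcases hH with ⟨n, hn1, hn2, rfl⟩ | hh
    · rw [chiInterval_true_iff] at hx
      exact ⟨n, Set.mem_Icc.2 ⟨hx.2, hn2⟩, rfl⟩
    · exfalso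
      subst hh
      rw [chiE_true_iff] at hx
      omega
  -- the set of thresholds consistent with the past and false at the query
  have ha1 : 1 ≤ (if k = 0 then 1 else qq d (k - 1)) := by
    split
    · omega
    · exact qq_pos d (k - 1)
  set a := if k = 0 then 1 else qq d (k - 1) with hadef
  have hfsup : chiInterval '' Set.Icc a (qq d k - 1) ⊆ Restrict V (qq d k) false := by
    rintro f ⟨n, hn, rfl⟩
    rw [Set.mem_Icc] at hn
    have hqpos : 1 ≤ qq d k := qq_pos d k
    have haq : a ≤ qq d k - 1 := by
      -- nonempty interval; follows from hn
      omega
    refine ⟨⟨chiInterval_mem_Hd' (by omega) (by omega), ?_⟩, ?_⟩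
    · rw [consistent_Sstar_take (by omega)]
      intro j hj
      rw [chiInterval_true_iff]
      have : qq d j ≤ a := by
        rcases Nat.eq_zero_or_pos k with rfl | hk1
        · omega
        · have := qq_mono (d := d) (j := j) (k := k - 1) (by omega)
          rw [hadef, if_neg (by omega)]
          exact this
      have := qq_pos d j
      omega
    · rw [chiInterval_false_iff]
      omega
  -- cardinality comparison
  have hfinf : (Restrict V (qq d k) false).Finite :=
    (Hd'_finite d).subset fun h hh => hh.1.1
  have ht : (Restrict V (qq d k) true).ncard ≤ 2 ^ d + 1 - qq d k := by
    calc (Restrict V (qq d k) true).ncard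
        ≤ (chiInterval '' Set.Icc (qq d k) (2 ^ d)).ncard :=
          Set.ncard_le_ncard htsub ((Set.finite_Icc _ _).image _)
      _ ≤ (Set.Icc (qq d k) (2 ^ d)).ncard := Set.ncard_image_le (Set.finite_Icc _ _)
      _ = 2 ^ d + 1 - qq d k := ncard_Icc _ _
  have hf : qq d k - 1 + 1 - a ≤ (Restrict V (qq d k) false).ncard := by
    calc qq d k - 1 + 1 - a = (Set.Icc a (qq d k - 1)).ncard := (ncard_Icc _ _).symm
      _ = (chiInterval '' Set.Icc a (qq d k - 1)).ncard :=
          (Set.ncard_image_of_injOn (chiInterval_injOn ha1)).symm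
      _ ≤ (Restrict V (qq d k) false).ncard := Set.ncard_le_ncard hfsup hfinf
  -- arithmetic
  have harith : 2 ^ d + 1 - qq d k ≤ qq d k - 1 + 1 - a := by
    rcases Nat.eq_zero_or_pos k with rfl | hk1
    · rw [hadef, if_pos rfl]
      have e0 : qq d 0 = 2 ^ d - 2 ^ (d - 1 - 0) + 1 := rfl
      have e1 : (2:ℕ) ^ d = 2 ^ (d - 1) * 2 := by
        rw [← pow_succ]
        congr 1
        omega
      have e2 : (1:ℕ) ≤ 2 ^ (d - 1) := Nat.one_le_two_pow
      rw [e0]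
      simp only [Nat.sub_zero]
      omega
    · rw [hadef, if_neg (by omega)]
      have e0 : qq d k = 2 ^ d - 2 ^ (d - 1 - k) + 1 := rfl
      have e0' : qq d (k - 1) = 2 ^ d - 2 ^ (d - 1 - (k - 1)) + 1 := rfl
      have ee : d - 1 - (k - 1) = d - k := by omega
      rw [ee] at e0'
      have e1 : (2:ℕ) ^ (d - k) = 2 ^ (d - 1 - k) * 2 := by
        rw [← pow_succ]
        congr 1
        omega
      have e2 : (1:ℕ) ≤ 2 ^ (d - 1 - k) := Nat.one_le_two_pow
      have e3 : (2:ℕ) ^ (d - k) ≤ 2 ^ d := Nat.pow_le_pow_right (by norm_num) (by omega)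
      rw [e0, e0']
      omega
  omega

lemma mistakes_Sstar {d : ℕ} (hd : 2 < d) : Mistakes (lrn d) (Sstar d) = d := by
  have hlen : (Sstar d).length = d := by simp [Sstar]
  rw [Mistakes, mistakesFrom_all_wrong (Sstar d) [], hlen]
  intro k hk
  rw [hlen] at hk
  have hget : (Sstar d)[k]'(by rw [hlen]; exact hk) = (qq d k, true) := by
    simp [Sstar]
  rw [List.nil_append, hget, lrn_Sstar_false hd hk]
  simp

end Samples
section Final

lemma MB_lrn {d : ℕ} (hd : 2 < d) : MB (lrn d) (Hd' d) = (d : ℕ∞) := by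
  apply le_antisymm
  · refine iSup₂_le fun S hS => ?_
    exact_mod_cast Nat.cast_le.2 (main_bound hd hS)
  · have h1 : ((d : ℕ∞)) ≤ (Mistakes (lrn d) (Sstar d) : ℕ∞) := by
      exact_mod_cast (mistakes_Sstar hd).ge
    refine le_trans h1 ?_
    exact le_iSup₂ (f := fun S (_ : S ∈ {S | Realizable (Hd' d) S}) =>
      ((Mistakes (lrn d) S : ℕ∞))) (Sstar d) (realizable_Sstar d)

lemma mistakesFrom_chiE_zero {d : ℕ} : ∀ (S' pre : List (ℕ × Bool)),
    (∀ p ∈ S', chiE d p.1 = p.2) →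
    MistakesFrom (fun (_ : List (ℕ × Bool)) x => chiE d x) pre S' = 0
  | [], _, _ => rfl
  | p :: rest, pre, h => by
      rw [mistakesFrom_cons, if_neg (by simp [h p (by simp)]),
        mistakesFrom_chiE_zero rest (pre ++ [p]) (fun q hq => h q (by simp [hq]))]

lemma anytime_le_one {d : ℕ} (hd : 2 < d) (A : List (ℕ × Bool) → ℕ → Bool)
    (hA : AnytimeOptimal A (Hd' d)) : Mistakes A (SE d) ≤ 1 := by
  set S₁ := (SE d).take 1 with hS₁
  have hlen1 : S₁.length = 1 := by
    rw [hS₁, List.length_take, SE_length]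
    omega
  have hr₁ : Realizable (Hd' d) S₁ :=
    realizable_sub (realizable_SE hd) (fun q hq => List.mem_of_mem_take hq)
  have hbig1 : hasBig d S₁ := hasBig_of_prefix (List.take_prefix 1 (SE d)) (by omega)
  -- the chiE-predictor has zero post-S₁ mistakes
  have hB : PostMB (fun (_ : List (ℕ × Bool)) x => chiE d x) (Hd' d) S₁ = 0 := by
    apply le_antisymm _ zero_le
    refine iSup₂_le fun S' hS' => ?_
    have hforced : ∀ p ∈ S₁ ++ S', chiE d p.1 = p.2 := by
      obtain ⟨h, hh, hc⟩ := hS'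
      have : h = chiE d := consistent_forces_chiE hd hh hc
        ⟨hbig1.choose, List.mem_append_left _ hbig1.choose_spec.1, hbig1.choose_spec.2⟩
      intro p hp
      rw [← this]
      exact hc p hp
    have h0 : Mistakes (fun (_ : List (ℕ × Bool)) x => chiE d x) (S₁ ++ S') = 0 := by
      rw [Mistakes]
      exact mistakesFrom_chiE_zero (S₁ ++ S') [] hforced
    rw [h0]
    simp
  have hOpt : OptPostMB (Hd' d) S₁ = 0 := by
    apply le_antisymm _ zero_le
    exact le_trans (iInf_le _ (fun (_ : List (ℕ × Bool)) x => chiE d x)) hB.le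
  have hPA : PostMB A (Hd' d) S₁ = 0 := by
    rw [hA S₁ hr₁, hOpt]
  -- apply to the rest of SE
  have hterm : ((Mistakes A (S₁ ++ (SE d).drop 1) - Mistakes A S₁ : ℕ) : ℕ∞) ≤
      PostMB A (Hd' d) S₁ := by
    refine le_iSup₂ (f := fun S' (_ : S' ∈ {S' | Realizable (Hd' d) (S₁ ++ S')}) =>
      ((Mistakes A (S₁ ++ S') - Mistakes A S₁ : ℕ) : ℕ∞)) ((SE d).drop 1) ?_
    show Realizable (Hd' d) (S₁ ++ (SE d).drop 1)
    rw [hS₁, List.take_append_drop]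
    exact realizable_SE hd
  rw [hPA] at hterm
  have hterm' : Mistakes A (S₁ ++ (SE d).drop 1) - Mistakes A S₁ = 0 := by
    exact_mod_cast le_antisymm hterm zero_le
  rw [hS₁, List.take_append_drop, ← hS₁] at hterm'
  have hm1 : Mistakes A S₁ ≤ 1 := by
    rw [Mistakes]
    have := mistakesFrom_le_length (A := A) S₁ []
    omega
  omega

end Final
/-- `Ldim(H_d') = d`, there is an optimal learner (mistake bound `d`) that
makes `d-1` mistakes on the realizable sample `((x,1))_{x∈E}`, while every anytime
optimal learner makes at most 1 mistake on it. -/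
theorem stmt8 (d : ℕ) (hd : 2 < d) :
    Ldim (Hd' d) = ((d : ℕ∞) : WithBot ℕ∞) ∧
    Realizable (Hd' d) (SE d) ∧
    (∃ A : List (ℕ × Bool) → ℕ → Bool,
      MB A (Hd' d) = (d : ℕ∞) ∧ Mistakes A (SE d) = d - 1) ∧
    (∀ A : List (ℕ × Bool) → ℕ → Bool,
      AnytimeOptimal A (Hd' d) → Mistakes A (SE d) ≤ 1) := by
  exact ⟨Ldim_Hd' (by omega), realizable_SE hd,
    ⟨lrn d, MB_lrn hd, mistakes_SE hd⟩, fun A hA => anytime_le_one hd A hA⟩
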